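/- Let f : (ℝᵈ)ⁿ → ℝᵈ be continuously differentiable and let x = (x₁, …, xₙ) ∈ (ℝᵈ)ⁿ. Then the rank of the Fréchet derivative D(σf)(x) of the shift (σf) at x equals d·(n−1) + rank(∂f/∂x₁(x)), where ∂f/∂x₁(x) is the derivative at x₁ of the map x ↦ f(x, x₂, …, xₙ) with x₂, …, xₙ fixed. -/

import Mathlib

/-- The shift of `f : Xⁿ⁺¹ → X`: `(σf)(x₁, …, xₙ₊₁) = (x₂, …, xₙ₊₁, f(x₁, …, xₙ₊₁))`. -/
def shift {X : Type*} {n : ℕ} (f : (Fin (n + 1) → X) → X) (x : Fin (n + 1) → X) :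
    Fin (n + 1) → X :=
  Fin.snoc (fun i : Fin n => x i.succ) (f x)

/-- For a continuously differentiable `f : (ℝᵈ)ⁿ → ℝᵈ` (here the context window has
length `n + 1`), the rank of the Fréchet derivative of the shift `(σf)` at `x` equals
`d·(n − 1)` (here `d·n`) plus the rank of the partial derivative `∂f/∂x₁(x)`, the
derivative at `x₁` of the map `z ↦ f(z, x₂, …, xₙ)` with the other coordinates fixed. -/
theorem rank_fderiv_shift {d n : ℕ}
    (f : (Fin (n + 1) → EuclideanSpace ℝ (Fin d)) → EuclideanSpace ℝ (Fin d))
    (hf : ContDiff ℝ 1 f) (x : Fin (n + 1) → EuclideanSpace ℝ (Fin d)) :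
    Module.finrank ℝ (LinearMap.range ((fderiv ℝ (shift f) x :
      (Fin (n + 1) → EuclideanSpace ℝ (Fin d)) →ₗ[ℝ] Fin (n + 1) → EuclideanSpace ℝ (Fin d)))) =
      d * n +
        Module.finrank ℝ
          (LinearMap.range ((fderiv ℝ (fun z => f (Function.update x 0 z)) (x 0) :
            EuclideanSpace ℝ (Fin d) →ₗ[ℝ] EuclideanSpace ℝ (Fin d)))) := by
  have hF : HasFDerivAt f (fderiv ℝ f x) x :=
    ((hf.differentiable one_ne_zero) x).hasFDerivAt
  set F := fderiv ℝ f x with hFdef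
  -- the derivative of the shift
  set L : (Fin (n + 1) → EuclideanSpace ℝ (Fin d)) →L[ℝ]
      (Fin (n + 1) → EuclideanSpace ℝ (Fin d)) := ContinuousLinearMap.pi
    (fun i : Fin (n + 1) =>
      Fin.lastCases (motive := fun _ =>
          (Fin (n + 1) → EuclideanSpace ℝ (Fin d)) →L[ℝ] EuclideanSpace ℝ (Fin d)) F
        (fun j => ContinuousLinearMap.proj j.succ) i) with hLdef
  have hLapp : ∀ (v : Fin (n + 1) → EuclideanSpace ℝ (Fin d)) (i : Fin (n + 1)),
      L v i = Fin.lastCases (motive := fun _ => EuclideanSpace ℝ (Fin d))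
        (F v) (fun j => v j.succ) i := by
    intro v i
    refine Fin.lastCases ?_ ?_ i
    · simp [hLdef, ContinuousLinearMap.pi_apply, Fin.lastCases_last]
    · intro j
      simp [hLdef, ContinuousLinearMap.pi_apply, Fin.lastCases_castSucc]
  have hshift : HasFDerivAt (shift f) L x := by
    have : HasFDerivAt
        (fun y (i : Fin (n + 1)) =>
          Fin.lastCases (motive := fun _ => EuclideanSpace ℝ (Fin d)) (f y)
            (fun j => y j.succ) i) L x := by
      rw [hLdef, hasFDerivAt_pi]
      intro i
      refine Fin.lastCases ?_ ?_ i
      · simpa [Fin.lastCases_last] using hF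
      · intro j
        simpa [Fin.lastCases_castSucc] using hasFDerivAt_apply (𝕜 := ℝ) j.succ x
    convert this using 2 with y
    funext i
    refine Fin.lastCases ?_ ?_ i
    · simp [shift, Fin.snoc_last, Fin.lastCases_last]
    · intro j
      simp [shift, Fin.snoc_castSucc, Fin.lastCases_castSucc]
  have hLfderiv : fderiv ℝ (shift f) x = L := hshift.fderiv
  -- the partial derivative
  set S : EuclideanSpace ℝ (Fin d) →L[ℝ] (Fin (n + 1) → EuclideanSpace ℝ (Fin d)) :=
    ContinuousLinearMap.pi (Pi.single 0 (ContinuousLinearMap.id ℝ (EuclideanSpace ℝ (Fin d))))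
    with hSdef
  have hSapp : ∀ w : EuclideanSpace ℝ (Fin d), S w = Pi.single (0 : Fin (n + 1)) w := by
    intro w
    funext i
    by_cases h : i = 0
    · subst h; simp [hSdef, ContinuousLinearMap.pi_apply]
    · simp [hSdef, ContinuousLinearMap.pi_apply, Pi.single, Function.update, (Ne.symm h), h]
  have hP : HasFDerivAt (fun z => f (Function.update x 0 z)) (F.comp S) (x 0) := by
    have h1 : HasFDerivAt (Function.update x 0) S (x 0) := hasFDerivAt_update x (x 0)
    have h2 : HasFDerivAt f F (Function.update x 0 (x 0)) := by
      rw [Function.update_eq_self]; exact hF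
    exact h2.comp (x 0) h1
  have hPfderiv : fderiv ℝ (fun z => f (Function.update x 0 z)) (x 0) = F.comp S :=
    hP.fderiv
  set P := F.comp S with hPdef
  -- kernels
  have hker : ∀ v : Fin (n + 1) → EuclideanSpace ℝ (Fin d),
      L v = 0 ↔ ((∀ j : Fin n, v j.succ = 0) ∧ F v = 0) := by
    intro v
    constructor
    · intro h
      constructor
      · intro j
        have := congrFun h (Fin.castSucc j)
        simpa [hLapp, Fin.lastCases_castSucc] using this
      · have := congrFun h (Fin.last n)
        simpa [hLapp, Fin.lastCases_last] using this
    · rintro ⟨h1, h2⟩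
      funext i
      refine Fin.lastCases ?_ ?_ i
      · simpa [hLapp, Fin.lastCases_last] using h2
      · intro j
        simpa [hLapp, Fin.lastCases_castSucc] using h1 j
  have hsingle : ∀ v : Fin (n + 1) → EuclideanSpace ℝ (Fin d),
      (∀ j : Fin n, v j.succ = 0) → v = Pi.single (0 : Fin (n + 1)) (v 0) := by
    intro v h
    funext i
    refine Fin.cases ?_ ?_ i
    · exact (Pi.single_eq_same (M := fun _ : Fin (n + 1) => EuclideanSpace ℝ (Fin d))
        0 (v 0)).symm
    · intro j
      rw [h j]
      exact (Pi.single_eq_of_ne (M := fun _ : Fin (n + 1) => EuclideanSpace ℝ (Fin d))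
        (Fin.succ_ne_zero j) (v 0)).symm
  -- linear equivalence between kernels
  let e : LinearMap.ker (L : (Fin (n + 1) → EuclideanSpace ℝ (Fin d)) →ₗ[ℝ]
        (Fin (n + 1) → EuclideanSpace ℝ (Fin d))) ≃ₗ[ℝ]
      LinearMap.ker (P : EuclideanSpace ℝ (Fin d) →ₗ[ℝ] EuclideanSpace ℝ (Fin d)) :=
    { toFun := fun v => ⟨v.1 0, by
        rcases (hker v.1).1 v.2 with ⟨h1, h2⟩
        have hv : v.1 = Pi.single (0 : Fin (n + 1)) (v.1 0) := hsingle v.1 h1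
        have hs : S (v.1 0) = v.1 := by rw [hSapp, ← hv]
        show F (S (v.1 0)) = 0
        rw [hs]
        exact h2⟩
      map_add' := fun a b => rfl
      map_smul' := fun c a => rfl
      invFun := fun w => ⟨Pi.single (0 : Fin (n + 1)) w.1, by
        show L (Pi.single (0 : Fin (n + 1)) w.1) = 0
        rw [hker]
        refine ⟨fun j => Pi.single_eq_of_ne
          (M := fun _ : Fin (n + 1) => EuclideanSpace ℝ (Fin d)) (Fin.succ_ne_zero j) _, ?_⟩
        have hPw : P w.1 = 0 := w.2
        rw [← hSapp]
        exact hPw⟩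
      left_inv := fun v => by
        rcases (hker v.1).1 v.2 with ⟨h1, _⟩
        exact Subtype.ext ((hsingle v.1 h1).symm)
      right_inv := fun w => Subtype.ext (by simp) }
  have hkereq : Module.finrank ℝ (LinearMap.ker (L : (Fin (n + 1) → EuclideanSpace ℝ (Fin d)) →ₗ[ℝ]
        (Fin (n + 1) → EuclideanSpace ℝ (Fin d)))) =
      Module.finrank ℝ
        (LinearMap.ker (P : EuclideanSpace ℝ (Fin d) →ₗ[ℝ] EuclideanSpace ℝ (Fin d))) :=
    e.finrank_eq
  have hrnL := LinearMap.finrank_range_add_finrank_ker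
    (L : (Fin (n + 1) → EuclideanSpace ℝ (Fin d)) →ₗ[ℝ]
      (Fin (n + 1) → EuclideanSpace ℝ (Fin d)))
  have hrnP := LinearMap.finrank_range_add_finrank_ker
    (P : EuclideanSpace ℝ (Fin d) →ₗ[ℝ] EuclideanSpace ℝ (Fin d))
  have hV : Module.finrank ℝ (Fin (n + 1) → EuclideanSpace ℝ (Fin d)) = d * (n + 1) := by
    rw [Module.finrank_pi_fintype]
    simp [finrank_euclideanSpace_fin, mul_comm]
  have hE : Module.finrank ℝ (EuclideanSpace ℝ (Fin d)) = d := finrank_euclideanSpace_fin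
  rw [hLfderiv, hPfderiv]
  rw [hV] at hrnL
  rw [hE] at hrnP
  rw [hkereq, show d * (n + 1) = d * n + d from by ring] at hrnL
  have e1 : LinearMap.range (L : (Fin (n + 1) → EuclideanSpace ℝ (Fin d)) →ₗ[ℝ]
      (Fin (n + 1) → EuclideanSpace ℝ (Fin d))) = LinearMap.range
      (L : (Fin (n + 1) → EuclideanSpace ℝ (Fin d)) →ₗ[ℝ]
        (Fin (n + 1) → EuclideanSpace ℝ (Fin d))) := rfl
  have e2 : LinearMap.range (P : EuclideanSpace ℝ (Fin d) →ₗ[ℝ] EuclideanSpace ℝ (Fin d)) =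
      LinearMap.range
      (P : EuclideanSpace ℝ (Fin d) →ₗ[ℝ] EuclideanSpace ℝ (Fin d)) := rfl
  rw [e1, e2]
  omega
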